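/- Let k ≥ 1, α ∈ (0,1), and let P be a nonzero measure on a product 𝒳₁ × … × 𝒳ₖ of finite sets. Then min over θ ∈ Δ([k]) of H_{α,θ}(P) equals max over Q ∈ Δ(supp P) of [ min_{j∈[k]} H(Q_j) − (α/(1−α)) D(Q‖P) ]. -/
import Mathlib


open Finset
open scoped Pointwise

noncomputable section

/-- A probability distribution on a finite set. -/
def probVec {X : Type*} [Fintype X] (Q : X → ℝ) : Prop :=
  (∀ x, 0 ≤ Q x) ∧ ∑ x, Q x = 1

/-- Shannon entropy (base 2) of a measure on a finite set; `0 · log 0 = 0`. -/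
def shEnt {X : Type*} [Fintype X] (Q : X → ℝ) : ℝ :=
  -∑ x, Q x * Real.logb 2 (Q x)

/-- Kullback–Leibler divergence (base 2); terms with `Q x = 0` vanish. -/
def klD {X : Type*} [Fintype X] (Q P : X → ℝ) : ℝ :=
  ∑ x, Q x * Real.logb 2 (Q x / P x)

/-- `j`-th marginal of a measure on a finite product. -/
def marg {k : ℕ} {𝒳 : Fin k → Type*} [∀ j, Fintype (𝒳 j)] [∀ j, DecidableEq (𝒳 j)]
    (P : (∀ j, 𝒳 j) → ℝ) (j : Fin k) : 𝒳 j → ℝ :=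
  fun a => ∑ x : ∀ i, 𝒳 i, if x j = a then P x else 0

/-- The functional `H_{α,θ}(P)`. -/
def Hat {k : ℕ} {𝒳 : Fin k → Type*} [∀ j, Fintype (𝒳 j)] [∀ j, DecidableEq (𝒳 j)]
    (α : ℝ) (θ : Fin k → ℝ) (P : (∀ j, 𝒳 j) → ℝ) : ℝ :=
  sSup { v : ℝ | ∃ Q : (∀ j, 𝒳 j) → ℝ, probVec Q ∧ (∀ x, P x = 0 → Q x = 0) ∧
    v = (∑ j, θ j * shEnt (marg Q j)) - α / (1 - α) * klD Q P }

/-- Rényi entropy of order `α` of a measure on a finite set. -/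
def renyiEnt {X : Type*} [Fintype X] (α : ℝ) (μ : X → ℝ) : ℝ :=
  (1 / (1 - α)) * Real.logb 2 (∑ x, μ x ^ α)

namespace S18
set_option linter.unusedSectionVars false
lemma shEnt_eq {X : Type*} [Fintype X] (μ : X → ℝ) :
    shEnt μ = (∑ x, Real.negMulLog (μ x)) / Real.log 2 := by
  rw [shEnt, ← Finset.sum_neg_distrib, Finset.sum_div]
  refine Finset.sum_congr rfl fun x _ => ?_
  rw [Real.negMulLog, Real.logb]; ring
lemma term_rewrite {p : ℝ} (hp : p ≠ 0) (q : ℝ) :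
    q * Real.logb 2 (q / p) = (q * Real.log q - q * Real.log p) / Real.log 2 := by
  rcases eq_or_ne q 0 with h | h
  · simp [h]
  · rw [Real.logb, Real.log_div h hp]; ring
lemma hlog2 : (0:ℝ) < Real.log 2 := Real.log_pos one_lt_two
variable {k : ℕ} {𝒳 : Fin k → Type} [∀ i, Fintype (𝒳 i)] [∀ i, DecidableEq (𝒳 i)]
lemma marg_comb (a b : ℝ) (Q Q' : (∀ i, 𝒳 i) → ℝ) (j : Fin k) (t : 𝒳 j) :
    marg (a • Q + b • Q') j t = a * marg Q j t + b * marg Q' j t := by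
  simp only [marg, Finset.mul_sum]
  rw [← Finset.sum_add_distrib]
  refine Finset.sum_congr rfl fun x _ => ?_
  by_cases hx : x j = t <;> simp [hx]
lemma marg_nonneg {Q : (∀ i, 𝒳 i) → ℝ} (hQ : ∀ x, 0 ≤ Q x) (j : Fin k) (t : 𝒳 j) :
    0 ≤ marg Q j t := by
  refine Finset.sum_nonneg fun x _ => ?_
  by_cases hx : x j = t <;> simp [hx, hQ x]
lemma cont_marg (j : Fin k) (t : 𝒳 j) :
    Continuous fun Q : (∀ i, 𝒳 i) → ℝ => marg Q j t := by
  refine continuous_finset_sum _ fun x _ => ?_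
  by_cases hx : x j = t <;> simp only [hx, if_true, if_false]
  · exact continuous_apply x
  · exact continuous_const
lemma cont_shEnt_marg (j : Fin k) :
    Continuous fun Q : (∀ i, 𝒳 i) → ℝ => shEnt (marg Q j) := by
  simp only [shEnt_eq]
  exact (continuous_finset_sum _ fun t _ =>
    Real.continuous_negMulLog.comp (cont_marg j t)).div_const _
lemma cont_klD (P : (∀ i, 𝒳 i) → ℝ) :
    Continuous fun Q : (∀ i, 𝒳 i) → ℝ => klD Q P := by
  unfold klD
  refine continuous_finset_sum _ fun x _ => ?_
  by_cases hx : P x = 0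
  · simp only [hx, div_zero, Real.logb_zero, mul_zero]
    exact continuous_const
  · simp only [term_rewrite hx]
    exact ((Real.continuous_mul_log.comp (continuous_apply x)).sub
      ((continuous_apply x).mul continuous_const)).div_const _
lemma shEnt_concave {Q Q' : (∀ i, 𝒳 i) → ℝ} (hQ : ∀ x, 0 ≤ Q x) (hQ' : ∀ x, 0 ≤ Q' x)
    {a b : ℝ} (ha : 0 ≤ a) (hb : 0 ≤ b) (hab : a + b = 1) (j : Fin k) :
    a * shEnt (marg Q j) + b * shEnt (marg Q' j) ≤ shEnt (marg (a • Q + b • Q') j) := by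
  simp only [shEnt_eq]
  have harith : a * ((∑ t, Real.negMulLog (marg Q j t)) / Real.log 2) +
      b * ((∑ t, Real.negMulLog (marg Q' j t)) / Real.log 2)
      = (∑ t, (a * Real.negMulLog (marg Q j t) + b * Real.negMulLog (marg Q' j t)))
          / Real.log 2 := by
    rw [Finset.sum_add_distrib, ← Finset.mul_sum, ← Finset.mul_sum]; ring
  rw [harith, div_le_div_iff_of_pos_right hlog2]
  refine Finset.sum_le_sum fun t _ => ?_
  rw [marg_comb]
  have := Real.concaveOn_negMulLog.2 (Set.mem_Ici.mpr (marg_nonneg hQ j t))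
    (Set.mem_Ici.mpr (marg_nonneg hQ' j t)) ha hb hab
  simpa [smul_eq_mul] using this
lemma klD_convex {P Q Q' : (∀ i, 𝒳 i) → ℝ} (hQ : ∀ x, 0 ≤ Q x) (hQ' : ∀ x, 0 ≤ Q' x)
    (hQs : ∀ x, P x = 0 → Q x = 0) (hQ's : ∀ x, P x = 0 → Q' x = 0)
    {a b : ℝ} (ha : 0 ≤ a) (hb : 0 ≤ b) (hab : a + b = 1) :
    klD (a • Q + b • Q') P ≤ a * klD Q P + b * klD Q' P := by
  unfold klD
  rw [Finset.mul_sum, Finset.mul_sum, ← Finset.sum_add_distrib]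
  refine Finset.sum_le_sum fun x _ => ?_
  by_cases hx : P x = 0
  · simp [hx, hQs x hx, hQ's x hx]
  · rw [term_rewrite hx, term_rewrite hx, term_rewrite hx]
    simp only [Pi.add_apply, Pi.smul_apply, smul_eq_mul]
    have hconv := (Real.strictConvexOn_mul_log.convexOn).2
      (Set.mem_Ici.mpr (hQ x)) (Set.mem_Ici.mpr (hQ' x)) ha hb hab
    simp only [smul_eq_mul] at hconv
    have harith : a * ((Q x * Real.log (Q x) - Q x * Real.log (P x)) / Real.log 2) +
        b * ((Q' x * Real.log (Q' x) - Q' x * Real.log (P x)) / Real.log 2)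
        = (a * (Q x * Real.log (Q x)) + b * (Q' x * Real.log (Q' x))
            - (a * Q x + b * Q' x) * Real.log (P x)) / Real.log 2 := by ring
    rw [harith, div_le_div_iff_of_pos_right hlog2]
    linarith [hconv]
lemma fin_iInf_exists {ι : Type*} [Nonempty ι] [Finite ι] (f : ι → ℝ) :
    ∃ j₀, (⨅ j, f j) = f j₀ ∧ ∀ j, f j₀ ≤ f j := by
  obtain ⟨j₀, hj₀⟩ := Finite.exists_min f
  exact ⟨j₀, le_antisymm (ciInf_le (Set.finite_range f).bddBelow j₀) (le_ciInf hj₀), hj₀⟩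
end S18

/-- minimax identity,
`min_{θ ∈ Δ([k])} H_{α,θ}(P) = max_{Q ∈ Δ(supp P)} [min_j H(Q_j) − (α/(1−α)) D(Q‖P)]`. -/
theorem stmt18 {k : ℕ} (hk : 1 ≤ k) (𝒳 : Fin k → Type)
    [∀ i, Fintype (𝒳 i)] [∀ i, DecidableEq (𝒳 i)]
    (α : ℝ) (hα : α ∈ Set.Ioo (0 : ℝ) 1)
    (P : (∀ i, 𝒳 i) → ℝ) (hP0 : ∀ x, 0 ≤ P x) (hPne : P ≠ 0) :
    sInf { v : ℝ | ∃ θ : Fin k → ℝ, probVec θ ∧ v = Hat α θ P } =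
      sSup { v : ℝ | ∃ Q : (∀ i, 𝒳 i) → ℝ, probVec Q ∧ (∀ x, P x = 0 → Q x = 0) ∧
        v = (⨅ j : Fin k, shEnt (marg Q j)) - α / (1 - α) * klD Q P } := by
  classical
  obtain ⟨hα0, hα1⟩ := hα
  haveI : Nonempty (Fin k) := ⟨⟨0, hk⟩⟩
  set c : ℝ := α / (1 - α) with hc_def
  have hc : 0 ≤ c := div_nonneg hα0.le (by linarith)
  -- the feasible set C
  set C : Set ((∀ i, 𝒳 i) → ℝ) := {Q | probVec Q ∧ ∀ x, P x = 0 → Q x = 0} with hC_def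
  -- component functions
  set hF : Fin k → ((∀ i, 𝒳 i) → ℝ) → ℝ :=
    fun j Q => shEnt (marg Q j) - c * klD Q P with hF_def
  have hcontF : ∀ j, Continuous (hF j) :=
    fun j => (S18.cont_shEnt_marg j).sub (continuous_const.mul (S18.cont_klD P))
  -- C is compact
  have hCsub : C ⊆ Set.pi Set.univ (fun _ => Set.Icc (0:ℝ) 1) := by
    rintro Q ⟨⟨hQ0, hQ1⟩, -⟩ x -
    refine ⟨hQ0 x, ?_⟩
    rw [← hQ1]
    exact Finset.single_le_sum (fun y _ => hQ0 y) (Finset.mem_univ x)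
  have hCclosed : IsClosed C := by
    have h1 : IsClosed {Q : (∀ i, 𝒳 i) → ℝ | ∀ x, 0 ≤ Q x} := by
      have : {Q : (∀ i, 𝒳 i) → ℝ | ∀ x, 0 ≤ Q x} = ⋂ x, {Q : (∀ i, 𝒳 i) → ℝ | 0 ≤ Q x} := by
        ext Q; simp
      rw [this]
      exact isClosed_iInter fun x => isClosed_le continuous_const (continuous_apply x)
    have h2 : IsClosed {Q : (∀ i, 𝒳 i) → ℝ | ∑ x, Q x = 1} :=
      isClosed_eq (continuous_finset_sum _ fun x _ => continuous_apply x) continuous_const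
    have h3 : IsClosed {Q : (∀ i, 𝒳 i) → ℝ | ∀ x, P x = 0 → Q x = 0} := by
      have hrw : {Q : (∀ i, 𝒳 i) → ℝ | ∀ x, P x = 0 → Q x = 0}
          = ⋂ x, {Q : (∀ i, 𝒳 i) → ℝ | P x = 0 → Q x = 0} := by
        ext Q; simp
      rw [hrw]
      refine isClosed_iInter fun x => ?_
      by_cases hx : P x = 0
      · simp only [hx, forall_true_left]
        exact isClosed_eq (continuous_apply x) continuous_const
      · simp only [hx]
        convert isClosed_univ using 1
        ext Q; simp [hx]
    have : C = {Q | ∀ x, 0 ≤ Q x} ∩ ({Q | ∑ x, Q x = 1} ∩ {Q | ∀ x, P x = 0 → Q x = 0}) := by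
      ext Q; simp [hC_def, probVec, and_assoc]
    rw [this]
    exact h1.inter (h2.inter h3)
  have hCcompact : IsCompact C :=
    IsCompact.of_isClosed_subset (isCompact_univ_pi fun _ => isCompact_Icc) hCclosed hCsub
  -- base point
  obtain ⟨x₀, hx₀⟩ : ∃ x, P x ≠ 0 := Function.ne_iff.mp hPne
  set Q₀ : (∀ i, 𝒳 i) → ℝ := fun x => if x = x₀ then 1 else 0 with hQ₀_def
  have hQ₀ : Q₀ ∈ C := by
    refine ⟨⟨fun x => ?_, ?_⟩, fun x hx => ?_⟩
    · by_cases hx : x = x₀ <;> simp [hQ₀_def, hx]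
    · simp [hQ₀_def]
    · have : x ≠ x₀ := fun h => hx₀ (h ▸ hx)
      simp [hQ₀_def, this]
  -- C is convex-closed under the combinations we need
  have hCcomb : ∀ {Q Q' : (∀ i, 𝒳 i) → ℝ}, Q ∈ C → Q' ∈ C → ∀ {a b : ℝ},
      0 ≤ a → 0 ≤ b → a + b = 1 → a • Q + b • Q' ∈ C := by
    rintro Q Q' ⟨⟨hQ0, hQ1⟩, hQs⟩ ⟨⟨hQ'0, hQ'1⟩, hQ's⟩ a b ha hb hab
    refine ⟨⟨fun x => ?_, ?_⟩, fun x hx => ?_⟩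
    · have := hQ0 x; have := hQ'0 x
      simp only [Pi.add_apply, Pi.smul_apply, smul_eq_mul]
      nlinarith
    · simp only [Pi.add_apply, Pi.smul_apply, smul_eq_mul]
      rw [Finset.sum_add_distrib, ← Finset.mul_sum, ← Finset.mul_sum, hQ1, hQ'1]
      linarith
    · simp [Pi.add_apply, hQs x hx, hQ's x hx]
  -- concavity of hF on C
  have hFconc : ∀ {Q Q' : (∀ i, 𝒳 i) → ℝ}, Q ∈ C → Q' ∈ C → ∀ {a b : ℝ},
      0 ≤ a → 0 ≤ b → a + b = 1 → ∀ j,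
      a * hF j Q + b * hF j Q' ≤ hF j (a • Q + b • Q') := by
    rintro Q Q' ⟨⟨hQ0, hQ1⟩, hQs⟩ ⟨⟨hQ'0, hQ'1⟩, hQ's⟩ a b ha hb hab j
    have h1 := S18.shEnt_concave hQ0 hQ'0 ha hb hab j
    have h2 := S18.klD_convex hQ0 hQ'0 hQs hQ's ha hb hab (P := P)
    simp only [hF_def]
    nlinarith [mul_le_mul_of_nonneg_left h2 hc]
  -- the RHS set
  set SR : Set ℝ := { v : ℝ | ∃ Q : (∀ i, 𝒳 i) → ℝ, probVec Q ∧ (∀ x, P x = 0 → Q x = 0) ∧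
      v = (⨅ j : Fin k, shEnt (marg Q j)) - c * klD Q P } with hSR_def
  have hmin_eq : ∀ Q : (∀ i, 𝒳 i) → ℝ,
      (⨅ j, shEnt (marg Q j)) - c * klD Q P = ⨅ j, hF j Q := by
    intro Q
    obtain ⟨j₀, hj₀eq, hj₀min⟩ := S18.fin_iInf_exists (fun j => shEnt (marg Q j))
    have h2 : (⨅ j, hF j Q) = hF j₀ Q := by
      refine le_antisymm (ciInf_le (Set.finite_range _).bddBelow j₀) (le_ciInf fun j => ?_)
      simp only [hF_def]
      linarith [hj₀min j]
    rw [hj₀eq, h2]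
  have hSR_mem : ∀ Q, Q ∈ C → ((⨅ j, shEnt (marg Q j)) - c * klD Q P) ∈ SR :=
    fun Q hQ => ⟨Q, hQ.1, hQ.2, rfl⟩
  have hSR_ne : SR.Nonempty := ⟨_, hSR_mem Q₀ hQ₀⟩
  -- boundedness of hF on C
  have hFbound : ∀ j, ∃ M : ℝ, ∀ Q ∈ C, hF j Q ≤ M := by
    intro j
    obtain ⟨QM, -, hQM⟩ := hCcompact.exists_isMaxOn ⟨Q₀, hQ₀⟩ (hcontF j).continuousOn
    exact ⟨hF j QM, fun Q hQ => hQM hQ⟩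
  have hSR_bdd : BddAbove SR := by
    obtain ⟨M, hM⟩ := hFbound (Classical.arbitrary (Fin k))
    refine ⟨M, ?_⟩
    rintro w ⟨Q, hQ1, hQ2, rfl⟩
    rw [hmin_eq]
    exact le_trans (ciInf_le (Set.finite_range _).bddBelow _) (hM Q ⟨hQ1, hQ2⟩)
  set v : ℝ := sSup SR with hv_def
  -- rewriting the Hat summand
  have hsum_eq : ∀ θ : Fin k → ℝ, (∑ j, θ j = 1) → ∀ Q,
      (∑ j, θ j * shEnt (marg Q j)) - c * klD Q P = ∑ j, θ j * hF j Q := by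
    intro θ hθ Q
    simp only [hF_def, mul_sub]
    rw [Finset.sum_sub_distrib]
    congr 1
    rw [← Finset.sum_mul, hθ, one_mul]
  -- Hat set facts
  have hHatSet : ∀ θ : Fin k → ℝ, { w : ℝ | ∃ Q : (∀ i, 𝒳 i) → ℝ, probVec Q ∧
      (∀ x, P x = 0 → Q x = 0) ∧
      w = (∑ j, θ j * shEnt (marg Q j)) - α / (1 - α) * klD Q P }.Nonempty :=
    fun θ => ⟨_, Q₀, hQ₀.1, hQ₀.2, rfl⟩
  -- Step 1 : weak duality
  have step1 : ∀ θ : Fin k → ℝ, probVec θ → v ≤ Hat α θ P := by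
    intro θ hθ
    have hbdd : BddAbove { w : ℝ | ∃ Q : (∀ i, 𝒳 i) → ℝ, probVec Q ∧
        (∀ x, P x = 0 → Q x = 0) ∧
        w = (∑ j, θ j * shEnt (marg Q j)) - α / (1 - α) * klD Q P } := by
      choose M hM using hFbound
      refine ⟨∑ j, (θ j * M j), ?_⟩
      rintro w ⟨Q, hQ1, hQ2, rfl⟩
      rw [← hc_def, hsum_eq θ hθ.2 Q]
      exact Finset.sum_le_sum fun j _ =>
        mul_le_mul_of_nonneg_left (hM j Q ⟨hQ1, hQ2⟩) (hθ.1 j)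
    refine csSup_le hSR_ne ?_
    rintro w ⟨Q, hQ1, hQ2, rfl⟩
    have h1 : (⨅ j, shEnt (marg Q j)) ≤ ∑ j, θ j * shEnt (marg Q j) := by
      have : ∀ j ∈ Finset.univ, θ j * (⨅ j', shEnt (marg Q j')) ≤ θ j * shEnt (marg Q j) :=
        fun j _ => mul_le_mul_of_nonneg_left
          (ciInf_le (Set.finite_range _).bddBelow j) (hθ.1 j)
      calc (⨅ j, shEnt (marg Q j)) = ∑ j, θ j * (⨅ j', shEnt (marg Q j')) := by
            rw [← Finset.sum_mul, hθ.2, one_mul]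
        _ ≤ ∑ j, θ j * shEnt (marg Q j) := Finset.sum_le_sum this
    refine le_trans ?_ (le_csSup hbdd ⟨Q, hQ1, hQ2, rfl⟩)
    rw [← hc_def]
    linarith
  -- LHS set facts
  set SL : Set ℝ := { w : ℝ | ∃ θ : Fin k → ℝ, probVec θ ∧ w = Hat α θ P } with hSL_def
  have hSL_ne : SL.Nonempty := by
    refine ⟨Hat α (fun _ => (k:ℝ)⁻¹) P, ⟨fun _ => (k:ℝ)⁻¹, ⟨?_, ?_⟩, rfl⟩⟩
    · intro j
      positivity
    · simp only [Finset.sum_const, Finset.card_univ, Fintype.card_fin, nsmul_eq_mul]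
      field_simp
  have hSL_bdd : BddBelow SL := by
    refine ⟨v, ?_⟩
    rintro w ⟨θ, hθ, rfl⟩
    exact step1 θ hθ
  -- Step 2 : separation
  have step2 : ∀ ε : ℝ, 0 < ε → ∃ θ : Fin k → ℝ, probVec θ ∧ Hat α θ P ≤ v + ε := by
    intro ε hε
    set Φ : ((∀ i, 𝒳 i) → ℝ) → (Fin k → ℝ) := fun Q j => hF j Q with hΦ_def
    have hΦcont : Continuous Φ := continuous_pi fun j => hcontF j
    set K : Set (Fin k → ℝ) := Φ '' C with hK_def
    have hK : IsCompact K := hCcompact.image hΦcont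
    set N : Set (Fin k → ℝ) := {y | ∀ j, y j ≤ 0} with hN_def
    have hNclosed : IsClosed N := by
      have : N = Set.pi Set.univ (fun _ => Set.Iic (0:ℝ)) := by
        ext y; simp [hN_def, Set.mem_pi, Set.mem_Iic, Pi.le_def]
      rw [this]
      exact isClosed_set_pi fun j _ => isClosed_Iic
    set A : Set (Fin k → ℝ) := K + N with hA_def
    have hmemA : ∀ z ∈ K, ∀ n ∈ N, z + n ∈ A := fun z hz n hn => Set.add_mem_add hz hn
    have hAclosed : IsClosed A := hNclosed.add_left_of_isCompact hK
    have hAconv : Convex ℝ A := by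
      rintro y₁ hy₁ y₂ hy₂ a b ha hb hab
      obtain ⟨z₁, hz₁, n₁, hn₁, rfl⟩ := Set.mem_add.mp hy₁
      obtain ⟨z₂, hz₂, n₂, hn₂, rfl⟩ := Set.mem_add.mp hy₂
      obtain ⟨Q₁, hQ₁, rfl⟩ := hz₁
      obtain ⟨Q₂, hQ₂, rfl⟩ := hz₂
      have hQc : a • Q₁ + b • Q₂ ∈ C := hCcomb hQ₁ hQ₂ ha hb hab
      have key : ∀ j, (a • (Φ Q₁ + n₁) + b • (Φ Q₂ + n₂)) j ≤ Φ (a • Q₁ + b • Q₂) j := by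
        intro j
        have h1 := hFconc hQ₁ hQ₂ ha hb hab j
        have h2 := hn₁ j
        have h3 := hn₂ j
        simp only [hΦ_def, Pi.add_apply, Pi.smul_apply, smul_eq_mul]
        nlinarith [mul_le_mul_of_nonneg_left h2 ha, mul_le_mul_of_nonneg_left h3 hb]
      refine Set.mem_add.mpr ⟨Φ (a • Q₁ + b • Q₂), ⟨_, hQc, rfl⟩,
        (a • (Φ Q₁ + n₁) + b • (Φ Q₂ + n₂)) - Φ (a • Q₁ + b • Q₂), fun j => ?_, by abel⟩
      simp only [Pi.sub_apply]
      linarith [key j]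
    set u : Fin k → ℝ := fun _ => v + ε with hu_def
    have hu : u ∉ A := by
      rintro hmem
      obtain ⟨z, hz, n, hn, hzn⟩ := Set.mem_add.mp hmem
      obtain ⟨Q, hQ, rfl⟩ := hz
      have hge : ∀ j, v + ε ≤ hF j Q := by
        intro j
        have := congrFun hzn j
        simp only [hΦ_def, Pi.add_apply, hu_def] at this
        have hnj := hn j
        linarith [this.ge, this.le]
      have h1 : v + ε ≤ ⨅ j, hF j Q := le_ciInf hge
      have h2 := le_csSup hSR_bdd (hSR_mem Q hQ)
      rw [hmin_eq] at h2
      linarith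
    obtain ⟨f, s, hfA, hfu⟩ := geometric_hahn_banach_closed_point hAconv hAclosed hu
    set lam : Fin k → ℝ := fun j => f (Pi.single j (1:ℝ)) with hlam_def
    have hflin : ∀ y : Fin k → ℝ, f y = ∑ j, y j * lam j := by
      intro y
      conv_lhs => rw [← Finset.univ_sum_single y]
      rw [map_sum]
      refine Finset.sum_congr rfl fun j _ => ?_
      have h : Pi.single j (y j) = (y j) • (Pi.single j 1 : Fin k → ℝ) := by
        rw [← Pi.single_smul, smul_eq_mul, mul_one]
      rw [h, map_smul, smul_eq_mul, hlam_def]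
    have hΦmemA : ∀ Q ∈ C, Φ Q ∈ A := by
      intro Q hQ
      have : Φ Q + 0 ∈ A := hmemA _ ⟨Q, hQ, rfl⟩ 0 (fun j => le_refl 0)
      simpa using this
    have hfz₀ : f (Φ Q₀) < s := hfA _ (hΦmemA Q₀ hQ₀)
    have hlam0 : ∀ j, 0 ≤ lam j := by
      intro j
      by_contra hneg
      push_neg at hneg
      set t : ℝ := (s + 1 - f (Φ Q₀)) / (-lam j) with ht_def
      have ht : 0 < t := div_pos (by linarith) (by linarith)
      have hyA : Φ Q₀ + (-t) • (Pi.single j 1 : Fin k → ℝ) ∈ A := by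
        refine hmemA _ ⟨Q₀, hQ₀, rfl⟩ _ (fun j' => ?_)
        by_cases hj : j' = j
        · subst hj
          simp only [Pi.smul_apply, Pi.single_eq_same, smul_eq_mul, mul_one]
          linarith
        · simp [Pi.single_apply, hj]
      have hlt := hfA _ hyA
      rw [map_add, map_smul, smul_eq_mul] at hlt
      have hlam_j : f (Pi.single j 1) = lam j := rfl
      rw [hlam_j] at hlt
      have hmul : t * (-lam j) = s + 1 - f (Φ Q₀) :=
        div_mul_cancel₀ _ (by linarith : (-lam j) ≠ 0)
      nlinarith
    set T : ℝ := ∑ j, lam j with hT_def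
    have hT0 : 0 ≤ T := Finset.sum_nonneg fun j _ => hlam0 j
    have hT : 0 < T := by
      rcases hT0.lt_or_eq with h | h
      · exact h
      · exfalso
        have hall : ∀ j ∈ Finset.univ, lam j = 0 := by
          intro j hj
          have := (Finset.sum_eq_zero_iff_of_nonneg (fun j _ => hlam0 j)).mp h.symm
          exact this j hj
        have hfu0 : f u = 0 := by
          rw [hflin]
          exact Finset.sum_eq_zero fun j hj => by rw [hall j hj, mul_zero]
        have hfz0 : f (Φ Q₀) = 0 := by
          rw [hflin]
          exact Finset.sum_eq_zero fun j hj => by rw [hall j hj, mul_zero]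
        rw [hfz0] at hfz₀
        rw [hfu0] at hfu
        linarith
    refine ⟨fun j => lam j / T, ⟨fun j => div_nonneg (hlam0 j) hT0, ?_⟩, ?_⟩
    · rw [← Finset.sum_div, ← hT_def]
      exact div_self hT.ne'
    · rw [Hat]
      refine csSup_le (hHatSet _) ?_
      rintro w ⟨Q, hQ1, hQ2, rfl⟩
      have hfΦ : f (Φ Q) = ∑ j, lam j * hF j Q := by
        rw [hflin]
        exact Finset.sum_congr rfl fun j _ => by rw [hΦ_def]; ring
      have h1 : f (Φ Q) < s := hfA _ (hΦmemA Q ⟨hQ1, hQ2⟩)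
      have hfu_eq : f u = (v + ε) * T := by
        rw [hflin, hT_def, Finset.mul_sum]
      have hlt : ∑ j, lam j * hF j Q < (v + ε) * T := by
        rw [← hfΦ, ← hfu_eq]
        linarith
      have hw : (∑ j, (lam j / T) * shEnt (marg Q j)) - α / (1 - α) * klD Q P
          = (∑ j, lam j * hF j Q) / T := by
        rw [← hc_def, hsum_eq _ (by rw [← Finset.sum_div, ← hT_def]; exact div_self hT.ne') Q,
          Finset.sum_div]
        exact Finset.sum_congr rfl fun j _ => by ring
      rw [hw]
      rw [div_le_iff₀ hT]
      linarith
  -- conclusion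
  refine le_antisymm ?_ ?_
  · refine le_of_forall_pos_le_add fun ε hε => ?_
    obtain ⟨θ, hθ, hHat⟩ := step2 ε hε
    exact le_trans (csInf_le hSL_bdd ⟨θ, hθ, rfl⟩) hHat
  · exact le_csInf hSL_ne (by rintro w ⟨θ, hθ, rfl⟩; exact step1 θ hθ)
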